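/- Let (X,‖·‖) be a real normed space of dimension at least 2. The following conditions are equivalent: (i) ⊥_B ⊆ ⊥_{ρ*}; (ii) ⊥_B = ⊥_{ρ*}; (iii) ⊥_ρ ⊆ ⊥_{ρ*}; (iv) ⊥_{ρ*} ⊆ ⊥_ρ; (v) ⊥_{ρ*} = ⊥_ρ; (vi) ⊥_{ρ*} ⊆ ⊥_{ρ₊}; (vii) ⊥_{ρ*} ⊆ ⊥_{ρ₋}; (viii) ⊥_{ρ*} = ⊥_{ρ₋}; (ix) X is smooth, i.e., ρ₋(x,y) = ρ₊(x,y) for all x,y ∈ X. -/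

import Mathlib

open Filter Topology Set

/-- The norm derivative `ρ₊(x,y) = lim_{t→0⁺} (‖x+ty‖² − ‖x‖²)/(2t)`. -/
noncomputable def rhoPlus {X : Type*} [NormedAddCommGroup X] [NormedSpace ℝ X] (x y : X) : ℝ :=
  limUnder (𝓝[>] (0 : ℝ)) (fun t : ℝ => (‖x + t • y‖ ^ 2 - ‖x‖ ^ 2) / (2 * t))

/-- The norm derivative `ρ₋(x,y) = lim_{t→0⁻} (‖x+ty‖² − ‖x‖²)/(2t)`. -/
noncomputable def rhoMinus {X : Type*} [NormedAddCommGroup X] [NormedSpace ℝ X] (x y : X) : ℝ :=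
  limUnder (𝓝[<] (0 : ℝ)) (fun t : ℝ => (‖x + t • y‖ ^ 2 - ‖x‖ ^ 2) / (2 * t))

/-- `ρ*(x,y) := ρ₋(x,y)·ρ₊(x,y)`. -/
noncomputable def rhoStar {X : Type*} [NormedAddCommGroup X] [NormedSpace ℝ X] (x y : X) : ℝ :=
  rhoMinus x y * rhoPlus x y
/-- `ρ(x,y) := (ρ₋(x,y) + ρ₊(x,y))/2`. -/
noncomputable def rhoMid {X : Type*} [NormedAddCommGroup X] [NormedSpace ℝ X] (x y : X) : ℝ :=
  (rhoMinus x y + rhoPlus x y) / 2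

section Aux
variable {X : Type*} [NormedAddCommGroup X] [NormedSpace ℝ X]

/-- The difference quotient. -/
noncomputable def nQ (x y : X) (t : ℝ) : ℝ := (‖x + t • y‖ ^ 2 - ‖x‖ ^ 2) / (2 * t)

lemma convexOn_nf (x y : X) : ConvexOn ℝ univ (fun t : ℝ => ‖x + t • y‖ ^ 2) := by
  have h1 : ConvexOn ℝ univ (fun t : ℝ => ‖x + t • y‖) := by
    have h := (convexOn_univ_norm (E := X)).comp_affineMap (AffineMap.lineMap x (x + y))
    have he : (fun t : ℝ => ‖x + t • y‖) = (norm ∘ (AffineMap.lineMap x (x + y))) := by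
      funext t
      simp [AffineMap.lineMap_apply, add_comm]
    rw [he]
    simpa using h
  have h2 := (h1.pow (fun t _ => norm_nonneg _)) 2
  have he2 : (fun t : ℝ => ‖x + t • y‖ ^ 2) = (fun t : ℝ => ‖x + t • y‖) ^ 2 := by
    funext t; simp
  rw [he2]; exact h2

lemma nQ_eq_slope (x y : X) (t : ℝ) :
    nQ x y t = slope (fun t : ℝ => ‖x + t • y‖ ^ 2) 0 t / 2 := by
  rw [nQ, slope_def_field]
  simp only [zero_smul, add_zero, sub_zero]
  ring

lemma nQ_mono (x y : X) {s t : ℝ} (hs : s ≠ 0) (ht : t ≠ 0) (h : s ≤ t) :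
    nQ x y s ≤ nQ x y t := by
  have hm := (convexOn_nf x y).slope_mono (mem_univ (0:ℝ))
  have := hm ⟨mem_univ s, by simpa using hs⟩ ⟨mem_univ t, by simpa using ht⟩ h
  rw [nQ_eq_slope, nQ_eq_slope]
  linarith

lemma bddBelow_nQ (x y : X) : BddBelow (nQ x y '' Ioi 0) := by
  refine ⟨nQ x y (-1), ?_⟩
  rintro _ ⟨t, ht, rfl⟩
  exact nQ_mono x y (by norm_num) (ne_of_gt ht) (by linarith [mem_Ioi.1 ht])

lemma bddAbove_nQ (x y : X) : BddAbove (nQ x y '' Iio 0) := by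
  refine ⟨nQ x y 1, ?_⟩
  rintro _ ⟨t, ht, rfl⟩
  exact nQ_mono x y (ne_of_lt ht) one_ne_zero (by linarith [mem_Iio.1 ht])

lemma rhoPlus_eq_sInf (x y : X) : rhoPlus x y = sInf (nQ x y '' Ioi 0) := by
  have hmono : MonotoneOn (nQ x y) (Ioi 0) := fun a ha b hb hab =>
    nQ_mono x y (ne_of_gt ha) (ne_of_gt hb) hab
  exact (hmono.tendsto_nhdsGT (bddBelow_nQ x y)).limUnder_eq

lemma rhoMinus_eq_sSup (x y : X) : rhoMinus x y = sSup (nQ x y '' Iio 0) := by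
  have hmono : MonotoneOn (nQ x y) (Iio 0) := fun a ha b hb hab =>
    nQ_mono x y (ne_of_lt ha) (ne_of_lt hb) hab
  exact (hmono.tendsto_nhdsLT (bddAbove_nQ x y)).limUnder_eq

lemma tendsto_nQ_rhoPlus (x y : X) : Tendsto (nQ x y) (𝓝[>] 0) (𝓝 (rhoPlus x y)) := by
  rw [rhoPlus_eq_sInf]
  have hmono : MonotoneOn (nQ x y) (Ioi 0) := fun a ha b hb hab =>
    nQ_mono x y (ne_of_gt ha) (ne_of_gt hb) hab
  exact hmono.tendsto_nhdsGT (bddBelow_nQ x y)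

lemma tendsto_nQ_rhoMinus (x y : X) : Tendsto (nQ x y) (𝓝[<] 0) (𝓝 (rhoMinus x y)) := by
  rw [rhoMinus_eq_sSup]
  have hmono : MonotoneOn (nQ x y) (Iio 0) := fun a ha b hb hab =>
    nQ_mono x y (ne_of_lt ha) (ne_of_lt hb) hab
  exact hmono.tendsto_nhdsLT (bddAbove_nQ x y)

lemma rhoPlus_le_nQ (x y : X) {t : ℝ} (ht : 0 < t) : rhoPlus x y ≤ nQ x y t := by
  rw [rhoPlus_eq_sInf]; exact csInf_le (bddBelow_nQ x y) ⟨t, ht, rfl⟩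

lemma nQ_le_rhoMinus (x y : X) {t : ℝ} (ht : t < 0) : nQ x y t ≤ rhoMinus x y := by
  rw [rhoMinus_eq_sSup]; exact le_csSup (bddAbove_nQ x y) ⟨t, ht, rfl⟩

lemma rhoMinus_le_rhoPlus (x y : X) : rhoMinus x y ≤ rhoPlus x y := by
  rw [rhoPlus_eq_sInf]
  refine le_csInf ⟨nQ x y 1, 1, mem_Ioi.2 one_pos, rfl⟩ ?_
  rintro _ ⟨t, ht, rfl⟩
  rw [rhoMinus_eq_sSup]
  refine csSup_le ⟨nQ x y (-1), -1, mem_Iio.2 (by norm_num), rfl⟩ ?_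
  rintro _ ⟨s, hs, rfl⟩
  exact nQ_mono x y (ne_of_lt hs) (ne_of_gt ht) (le_of_lt ((mem_Iio.1 hs).trans ht))

lemma nQ_key (x y : X) (α t : ℝ) (ht : t ≠ 0) (hc : (0:ℝ) < 1 + t * α) :
    nQ x (y + α • x) t = (1 + t * α) * nQ x y (t / (1 + t * α)) + (α + t * α ^ 2 / 2) * ‖x‖ ^ 2 := by
  have hc0 : (1 + t * α) ≠ 0 := ne_of_gt hc
  have hxt : x + t • (y + α • x) = (1 + t * α) • (x + (t / (1 + t * α)) • y) := by
    have h1 : (1 + t * α) * (t / (1 + t * α)) = t := by field_simp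
    rw [smul_add, smul_smul, smul_add, smul_smul, h1]
    module
  rw [nQ, nQ, hxt, norm_smul, mul_pow, Real.norm_eq_abs, sq_abs]
  field_simp
  ring

lemma eventually_denom_pos (α : ℝ) (l : Filter ℝ) (hl : l ≤ 𝓝 0) :
    ∀ᶠ t in l, 0 < 1 + t * α := by
  have h : Tendsto (fun t : ℝ => 1 + t * α) l (𝓝 1) := by
    have : Tendsto (fun t : ℝ => 1 + t * α) (𝓝 (0:ℝ)) (𝓝 (1 + 0 * α)) := by
      exact (continuous_const.add (continuous_id.mul continuous_const)).tendsto 0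
    simpa [Function.comp_def] using this.comp (hl.trans_eq rfl) |>.mono_left le_rfl
  exact h.eventually (lt_mem_nhds one_pos)

lemma tendsto_sub_pos (α : ℝ) :
    Tendsto (fun t : ℝ => t / (1 + t * α)) (𝓝[>] 0) (𝓝[>] 0) := by
  rw [tendsto_nhdsWithin_iff]
  constructor
  · have h : Tendsto (fun t : ℝ => t / (1 + t * α)) (𝓝 (0:ℝ)) (𝓝 (0 / (1 + 0 * α))) :=
      (continuousAt_id.div (by fun_prop) (by norm_num)).tendsto
    simpa using h.mono_left nhdsWithin_le_nhds
  · filter_upwards [self_mem_nhdsWithin, eventually_denom_pos α _ nhdsWithin_le_nhds] with t ht hd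
    exact mem_Ioi.2 (div_pos (mem_Ioi.1 ht) hd)

lemma tendsto_sub_neg (α : ℝ) :
    Tendsto (fun t : ℝ => t / (1 + t * α)) (𝓝[<] 0) (𝓝[<] 0) := by
  rw [tendsto_nhdsWithin_iff]
  constructor
  · have h : Tendsto (fun t : ℝ => t / (1 + t * α)) (𝓝 (0:ℝ)) (𝓝 (0 / (1 + 0 * α))) :=
      (continuousAt_id.div (by fun_prop) (by norm_num)).tendsto
    simpa using h.mono_left nhdsWithin_le_nhds
  · filter_upwards [self_mem_nhdsWithin, eventually_denom_pos α _ nhdsWithin_le_nhds] with t ht hd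
    exact mem_Iio.2 (div_neg_of_neg_of_pos (mem_Iio.1 ht) hd)

lemma tendsto_shift (x y : X) (α : ℝ) (l : Filter ℝ) (hl : l ≤ 𝓝 0) [l.NeBot]
    (hne : ∀ᶠ t in l, t ≠ 0)
    (hsub : Tendsto (fun t : ℝ => t / (1 + t * α)) l l)
    (L : ℝ) (hQ : Tendsto (nQ x y) l (𝓝 L)) :
    Tendsto (nQ x (y + α • x)) l (𝓝 (L + α * ‖x‖ ^ 2)) := by
  have hc : Tendsto (fun t : ℝ => 1 + t * α) l (𝓝 1) := by
    have : Tendsto (fun t : ℝ => 1 + t * α) (𝓝 (0:ℝ)) (𝓝 (1 + 0 * α)) :=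
      (continuous_const.add (continuous_id.mul continuous_const)).tendsto 0
    simpa using this.comp (tendsto_id.mono_left hl)
  have hrem : Tendsto (fun t : ℝ => (α + t * α ^ 2 / 2) * ‖x‖ ^ 2) l
      (𝓝 ((α + 0 * α ^ 2 / 2) * ‖x‖ ^ 2)) := by
    have : Tendsto (fun t : ℝ => (α + t * α ^ 2 / 2) * ‖x‖ ^ 2) (𝓝 (0:ℝ))
        (𝓝 ((α + 0 * α ^ 2 / 2) * ‖x‖ ^ 2)) :=
      ((continuous_const.add ((continuous_id.mul continuous_const).div_const 2)).mul
        continuous_const).tendsto 0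
    exact this.comp (tendsto_id.mono_left hl)
  have hmain : Tendsto (fun t : ℝ => (1 + t * α) * nQ x y (t / (1 + t * α))
      + (α + t * α ^ 2 / 2) * ‖x‖ ^ 2) l (𝓝 (1 * L + (α + 0 * α ^ 2 / 2) * ‖x‖ ^ 2)) :=
    (hc.mul (hQ.comp hsub)).add hrem
  have heq : ∀ᶠ t in l, (1 + t * α) * nQ x y (t / (1 + t * α))
      + (α + t * α ^ 2 / 2) * ‖x‖ ^ 2 = nQ x (y + α • x) t := by
    filter_upwards [hne, eventually_denom_pos α l hl] with t ht hd
    rw [nQ_key x y α t ht hd]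
  have := hmain.congr' heq
  simpa using this

lemma rhoPlus_add_smul (x y : X) (α : ℝ) :
    rhoPlus x (y + α • x) = rhoPlus x y + α * ‖x‖ ^ 2 := by
  have h := tendsto_shift x y α (𝓝[>] 0) nhdsWithin_le_nhds
    (by filter_upwards [self_mem_nhdsWithin] with t ht; exact ne_of_gt (mem_Ioi.1 ht))
    (tendsto_sub_pos α) _ (tendsto_nQ_rhoPlus x y)
  exact h.limUnder_eq

lemma rhoMinus_add_smul (x y : X) (α : ℝ) :
    rhoMinus x (y + α • x) = rhoMinus x y + α * ‖x‖ ^ 2 := by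
  have h := tendsto_shift x y α (𝓝[<] 0) nhdsWithin_le_nhds
    (by filter_upwards [self_mem_nhdsWithin] with t ht; exact ne_of_lt (mem_Iio.1 ht))
    (tendsto_sub_neg α) _ (tendsto_nQ_rhoMinus x y)
  exact h.limUnder_eq

lemma tendsto_nQ_zero_left (y : X) (l : Filter ℝ) (hl : l ≤ 𝓝 0) (hne : ∀ᶠ t in l, t ≠ 0) :
    Tendsto (nQ (0 : X) y) l (𝓝 0) := by
  have h2 : Tendsto (fun t : ℝ => t * ‖y‖ ^ 2 / 2) l (𝓝 (0 * ‖y‖ ^ 2 / 2)) :=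
    (((continuous_id.mul continuous_const).div_const 2).tendsto 0).comp (tendsto_id.mono_left hl)
  have heq : ∀ᶠ t in l, t * ‖y‖ ^ 2 / 2 = nQ (0 : X) y t := by
    filter_upwards [hne] with t ht
    rw [nQ, zero_add, norm_smul, norm_zero, mul_pow, Real.norm_eq_abs, sq_abs]
    field_simp
    ring
  simpa using h2.congr' heq

lemma rhoPlus_zero_left (y : X) : rhoPlus (0 : X) y = 0 :=
  tendsto_nhds_unique (tendsto_nQ_rhoPlus (0 : X) y)
    (tendsto_nQ_zero_left y _ nhdsWithin_le_nhds
      (by filter_upwards [self_mem_nhdsWithin] with t ht; exact ne_of_gt (mem_Ioi.1 ht)))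

lemma rhoMinus_zero_left (y : X) : rhoMinus (0 : X) y = 0 :=
  tendsto_nhds_unique (tendsto_nQ_rhoMinus (0 : X) y)
    (tendsto_nQ_zero_left y _ nhdsWithin_le_nhds
      (by filter_upwards [self_mem_nhdsWithin] with t ht; exact ne_of_lt (mem_Iio.1 ht)))

lemma nQ_num (x y : X) {t : ℝ} (ht : t ≠ 0) :
    ‖x + t • y‖ ^ 2 - ‖x‖ ^ 2 = nQ x y t * (2 * t) := by
  rw [nQ]; field_simp

lemma birkhoff_iff (x y : X) :
    (∀ lam : ℝ, ‖x‖ ≤ ‖x + lam • y‖) ↔ (rhoMinus x y ≤ 0 ∧ 0 ≤ rhoPlus x y) := by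
  constructor
  · intro h
    constructor
    · apply le_of_tendsto (tendsto_nQ_rhoMinus x y)
      filter_upwards [self_mem_nhdsWithin] with t ht
      have ht0 : t < 0 := mem_Iio.1 ht
      have h1 : ‖x‖ ^ 2 ≤ ‖x + t • y‖ ^ 2 := pow_le_pow_left₀ (norm_nonneg _) (h t) 2
      rw [nQ]
      exact div_nonpos_of_nonneg_of_nonpos (by linarith) (by linarith)
    · apply ge_of_tendsto (tendsto_nQ_rhoPlus x y)
      filter_upwards [self_mem_nhdsWithin] with t ht
      have ht0 : 0 < t := mem_Ioi.1 ht
      have h1 : ‖x‖ ^ 2 ≤ ‖x + t • y‖ ^ 2 := pow_le_pow_left₀ (norm_nonneg _) (h t) 2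
      rw [nQ]
      exact div_nonneg (by linarith) (by linarith)
  · rintro ⟨h1, h2⟩ lam
    rcases lt_trichotomy lam 0 with h | h | h
    · have hq : nQ x y lam ≤ 0 := (nQ_le_rhoMinus x y h).trans h1
      have hnum : 0 ≤ ‖x + lam • y‖ ^ 2 - ‖x‖ ^ 2 := by
        rw [nQ_num x y (ne_of_lt h)]
        nlinarith
      exact le_of_pow_le_pow_left₀ two_ne_zero (norm_nonneg _) (by linarith)
    · simp [h]
    · have hq : 0 ≤ nQ x y lam := h2.trans (rhoPlus_le_nQ x y h)
      have hnum : 0 ≤ ‖x + lam • y‖ ^ 2 - ‖x‖ ^ 2 := by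
        rw [nQ_num x y (ne_of_gt h)]
        exact mul_nonneg hq (by linarith)
      exact le_of_pow_le_pow_left₀ two_ne_zero (norm_nonneg _) (by linarith)

lemma exists_bad (h : ¬ ∀ x y : X, rhoMinus x y = rhoPlus x y) :
    ∃ x y : X, rhoMinus x y < rhoPlus x y ∧ 0 < ‖x‖ ^ 2 := by
  push_neg at h
  obtain ⟨x, y, hxy⟩ := h
  refine ⟨x, y, lt_of_le_of_ne (rhoMinus_le_rhoPlus x y) hxy, ?_⟩
  have hx : x ≠ 0 := by
    rintro rfl
    exact hxy ((rhoMinus_zero_left y).trans (rhoPlus_zero_left y).symm)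
  exact pow_pos (norm_pos_iff.2 hx) 2

end Aux

theorem smooth_tfae {X : Type*} [NormedAddCommGroup X] [NormedSpace ℝ X]
    (hdim : 2 ≤ Module.rank ℝ X) :
    List.TFAE
      [ ∀ x y : X, (∀ lam : ℝ, ‖x‖ ≤ ‖x + lam • y‖) → rhoStar x y = 0,
        ∀ x y : X, (∀ lam : ℝ, ‖x‖ ≤ ‖x + lam • y‖) ↔ rhoStar x y = 0,
        ∀ x y : X, rhoMid x y = 0 → rhoStar x y = 0,
        ∀ x y : X, rhoStar x y = 0 → rhoMid x y = 0,
        ∀ x y : X, rhoStar x y = 0 ↔ rhoMid x y = 0,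
        ∀ x y : X, rhoStar x y = 0 → rhoPlus x y = 0,
        ∀ x y : X, rhoStar x y = 0 → rhoMinus x y = 0,
        ∀ x y : X, rhoStar x y = 0 ↔ rhoMinus x y = 0,
        ∀ x y : X, rhoMinus x y = rhoPlus x y ] := by
  tfae_have 9 → 2 := by
    intro h x y
    rw [birkhoff_iff, rhoStar, h x y, mul_self_eq_zero]
    exact ⟨fun ⟨h1, h2⟩ => le_antisymm h1 h2, fun h0 => ⟨le_of_eq h0, ge_of_eq h0⟩⟩
  tfae_have 2 → 1 := fun h x y hB => (h x y).1 hB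
  tfae_have 9 → 5 := by
    intro h x y
    rw [rhoStar, rhoMid, h x y, mul_self_eq_zero]
    constructor
    · intro h0; rw [h0]; ring
    · intro h0; linarith
  tfae_have 5 → 3 := fun h x y => (h x y).2
  tfae_have 5 → 4 := fun h x y => (h x y).1
  tfae_have 9 → 8 := by
    intro h x y
    rw [rhoStar, h x y, mul_self_eq_zero]
  tfae_have 9 → 6 := by
    intro h x y
    rw [rhoStar, h x y, mul_self_eq_zero]
    exact id
  tfae_have 8 → 7 := fun h x y => (h x y).1
  tfae_have 1 → 9 := by
    intro h
    by_contra h9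
    obtain ⟨x, y, hlt, hn⟩ := exists_bad h9
    set a := rhoMinus x y
    set b := rhoPlus x y
    set α : ℝ := -(a + b) / (2 * ‖x‖ ^ 2) with hα
    have hm : rhoMinus x (y + α • x) = (a - b) / 2 := by
      rw [rhoMinus_add_smul, hα]
      have hx0 : ‖x‖ ≠ 0 := by rintro h0; simp [h0] at hn
      simp only [a, b]; field_simp; ring
    have hp : rhoPlus x (y + α • x) = (b - a) / 2 := by
      rw [rhoPlus_add_smul, hα]
      have hx0 : ‖x‖ ≠ 0 := by rintro h0; simp [h0] at hn
      simp only [a, b]; field_simp; ring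
    have hB : ∀ lam : ℝ, ‖x‖ ≤ ‖x + lam • (y + α • x)‖ := by
      rw [birkhoff_iff, hm, hp]
      constructor <;> linarith
    have := h x (y + α • x) hB
    rw [rhoStar, hm, hp] at this
    nlinarith
  tfae_have 3 → 9 := by
    intro h
    by_contra h9
    obtain ⟨x, y, hlt, hn⟩ := exists_bad h9
    set a := rhoMinus x y
    set b := rhoPlus x y
    set α : ℝ := -(a + b) / (2 * ‖x‖ ^ 2) with hα
    have hm : rhoMinus x (y + α • x) = (a - b) / 2 := by
      rw [rhoMinus_add_smul, hα]
      have hx0 : ‖x‖ ≠ 0 := by rintro h0; simp [h0] at hn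
      simp only [a, b]; field_simp; ring
    have hp : rhoPlus x (y + α • x) = (b - a) / 2 := by
      rw [rhoPlus_add_smul, hα]
      have hx0 : ‖x‖ ≠ 0 := by rintro h0; simp [h0] at hn
      simp only [a, b]; field_simp; ring
    have hmid : rhoMid x (y + α • x) = 0 := by
      rw [rhoMid, hm, hp]; ring
    have := h x (y + α • x) hmid
    rw [rhoStar, hm, hp] at this
    nlinarith
  tfae_have 4 → 9 := by
    intro h
    by_contra h9
    obtain ⟨x, y, hlt, hn⟩ := exists_bad h9
    set a := rhoMinus x y
    set b := rhoPlus x y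
    set α : ℝ := -a / ‖x‖ ^ 2 with hα
    have hm : rhoMinus x (y + α • x) = 0 := by
      rw [rhoMinus_add_smul, hα]
      have hx0 : ‖x‖ ≠ 0 := by rintro h0; simp [h0] at hn
      simp only [a, b]; field_simp; ring
    have hp : rhoPlus x (y + α • x) = b - a := by
      rw [rhoPlus_add_smul, hα]
      have hx0 : ‖x‖ ≠ 0 := by rintro h0; simp [h0] at hn
      simp only [a, b]; field_simp; ring
    have hstar : rhoStar x (y + α • x) = 0 := by rw [rhoStar, hm, zero_mul]
    have := h x (y + α • x) hstar
    rw [rhoMid, hm, hp] at this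
    nlinarith
  tfae_have 6 → 9 := by
    intro h
    by_contra h9
    obtain ⟨x, y, hlt, hn⟩ := exists_bad h9
    set a := rhoMinus x y
    set b := rhoPlus x y
    set α : ℝ := -a / ‖x‖ ^ 2 with hα
    have hm : rhoMinus x (y + α • x) = 0 := by
      rw [rhoMinus_add_smul, hα]
      have hx0 : ‖x‖ ≠ 0 := by rintro h0; simp [h0] at hn
      simp only [a, b]; field_simp; ring
    have hp : rhoPlus x (y + α • x) = b - a := by
      rw [rhoPlus_add_smul, hα]
      have hx0 : ‖x‖ ≠ 0 := by rintro h0; simp [h0] at hn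
      simp only [a, b]; field_simp; ring
    have hstar : rhoStar x (y + α • x) = 0 := by rw [rhoStar, hm, zero_mul]
    have := h x (y + α • x) hstar
    rw [hp] at this
    nlinarith
  tfae_have 7 → 9 := by
    intro h
    by_contra h9
    obtain ⟨x, y, hlt, hn⟩ := exists_bad h9
    set a := rhoMinus x y
    set b := rhoPlus x y
    set α : ℝ := -b / ‖x‖ ^ 2 with hα
    have hp : rhoPlus x (y + α • x) = 0 := by
      rw [rhoPlus_add_smul, hα]
      have hx0 : ‖x‖ ≠ 0 := by rintro h0; simp [h0] at hn
      simp only [a, b]; field_simp; ring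
    have hm : rhoMinus x (y + α • x) = a - b := by
      rw [rhoMinus_add_smul, hα]
      have hx0 : ‖x‖ ≠ 0 := by rintro h0; simp [h0] at hn
      simp only [a, b]; field_simp; ring
    have hstar : rhoStar x (y + α • x) = 0 := by rw [rhoStar, hp, mul_zero]
    have := h x (y + α • x) hstar
    rw [hm] at this
    nlinarith
  tfae_finish
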